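/- Let B ⊆ ℝ² be open and connected with every vertical slice B ∩ ({x₀} × ℝ) either empty or connected. Let (c_i)_{i ∈ I} = ((x_i, y_i))_{i ∈ I} be a countable family of pairwise distinct points of B with only finitely many c_i on each vertical line, and such that {x_i : i ∈ I} has no accumulation point in pr₁(B). Let ε = (ε_i)_{i∈I} ∈ {+1,−1}^I and S_ε := B \ ⋃_{i ∈ I} l^{ε_i}(c_i). Then the following are equivalent: (i) S_ε is path-connected; (ii) S_ε is contractible; (iii) for all i, j ∈ I with x_i = x_j and y_i > y_j one has ε_i ≥ ε_j. -/

import Mathlib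

open Filter

/-- The vertical cut of `B ⊆ ℝ²` at the point `c` with sign `ε`:
`l^ε(c) = B ∩ {(x,y) | x = c.1 ∧ ε·y ≥ ε·c.2}`. -/
def vcut (B : Set (ℝ × ℝ)) (c : ℝ × ℝ) (ε : ℝ) : Set (ℝ × ℝ) :=
  {p : ℝ × ℝ | p ∈ B ∧ p.1 = c.1 ∧ ε * c.2 ≤ ε * p.2}

open Topology

lemma mem_S_iff {I : Type*} (B : Set (ℝ × ℝ)) (c : I → ℝ × ℝ) (ε : I → ℝ) (p : ℝ × ℝ) :
    p ∈ B \ ⋃ i, vcut B (c i) (ε i) ↔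
      p ∈ B ∧ ∀ i, p.1 = (c i).1 → ε i * p.2 < ε i * (c i).2 := by
  simp only [Set.mem_diff, Set.mem_iUnion, vcut, Set.mem_setOf_eq, not_exists]
  constructor
  · rintro ⟨hpB, h⟩
    refine ⟨hpB, fun i hi => ?_⟩
    by_contra hle
    exact h i ⟨hpB, hi, not_lt.1 hle⟩
  · rintro ⟨hpB, h⟩
    exact ⟨hpB, fun i hvi => absurd hvi.2.2 (not_le.2 (h i hvi.2.1))⟩

lemma slice_ordConnected (B : Set (ℝ × ℝ))
    (hslice : ∀ x₀ : ℝ, B ∩ {p : ℝ × ℝ | p.1 = x₀} = ∅ ∨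
      IsConnected (B ∩ {p : ℝ × ℝ | p.1 = x₀}))
    (x : ℝ) : Set.OrdConnected {y : ℝ | (x, y) ∈ B} := by
  rcases hslice x with h | h
  · have he : {y : ℝ | (x, y) ∈ B} = ∅ := by
      ext y
      simp only [Set.mem_setOf_eq, Set.mem_empty_iff_false, iff_false]
      intro hy
      have : (x, y) ∈ B ∩ {p : ℝ × ℝ | p.1 = x} := ⟨hy, rfl⟩
      rw [h] at this
      exact this
    rw [he]
    exact Set.ordConnected_empty
  · have himg : {y : ℝ | (x, y) ∈ B} = Prod.snd '' (B ∩ {p : ℝ × ℝ | p.1 = x}) := by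
      ext y
      constructor
      · intro hy; exact ⟨(x, y), ⟨hy, rfl⟩, rfl⟩
      · rintro ⟨p, ⟨hpB, hpx⟩, rfl⟩
        simp only [Set.mem_setOf_eq] at hpx ⊢
        rw [← hpx]
        simpa using hpB
    rw [himg]
    exact (h.isPreconnected.image _ continuous_snd.continuousOn).ordConnected

lemma acc_nbhd {I : Type*} (c : I → ℝ × ℝ) {x : ℝ}
    (h : ¬ AccPt x (𝓟 (Set.range fun i => (c i).1))) :
    ∃ δ > 0, ∀ i, |(c i).1 - x| < δ → (c i).1 = x := by
  rw [accPt_iff_nhds] at h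
  push_neg at h
  obtain ⟨U, hU, hU2⟩ := h
  obtain ⟨δ, hδ, hball⟩ := Metric.mem_nhds_iff.1 hU
  refine ⟨δ, hδ, fun i hi => ?_⟩
  exact hU2 _ ⟨hball (by simpa [Real.dist_eq] using hi), ⟨i, rfl⟩⟩

lemma S_open {I : Type*} (B : Set (ℝ × ℝ)) (hB : IsOpen B) (c : I → ℝ × ℝ)
    (hfin : ∀ x₀ : ℝ, {i : I | (c i).1 = x₀}.Finite)
    (hacc : ∀ x ∈ Prod.fst '' B, ¬ AccPt x (𝓟 (Set.range fun i => (c i).1)))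
    (ε : I → ℝ) : IsOpen (B \ ⋃ i, vcut B (c i) (ε i)) := by
  rw [isOpen_iff_mem_nhds]
  intro p hp
  rw [mem_S_iff] at hp
  obtain ⟨hpB, hpc⟩ := hp
  obtain ⟨δ, hδ, hδc⟩ := acc_nbhd c (hacc p.1 ⟨p, hpB, rfl⟩)
  set W : Set (ℝ × ℝ) := (B ∩ {q : ℝ × ℝ | |q.1 - p.1| < δ}) ∩
    ⋂ i ∈ (hfin p.1).toFinset, {q : ℝ × ℝ | ε i * q.2 < ε i * (c i).2} with hW
  have hWopen : IsOpen W := by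
    refine IsOpen.inter (hB.inter ?_) (isOpen_biInter_finset fun i _ => ?_)
    · exact isOpen_lt (by fun_prop) continuous_const
    · exact isOpen_lt (by fun_prop) continuous_const
  have hpW : p ∈ W := by
    refine ⟨⟨hpB, by simp [hδ]⟩, ?_⟩
    simp only [Set.mem_iInter, Set.Finite.mem_toFinset, Set.mem_setOf_eq]
    intro i hi
    exact hpc i hi.symm
  have hWS : W ⊆ B \ ⋃ i, vcut B (c i) (ε i) := by
    rintro q ⟨⟨hqB, hqd⟩, hq2⟩
    rw [mem_S_iff]
    refine ⟨hqB, fun i hi => ?_⟩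
    have hix : (c i).1 = p.1 := hδc i (by rw [← hi]; exact hqd)
    simp only [Set.mem_iInter, Set.Finite.mem_toFinset, Set.mem_setOf_eq] at hq2
    exact hq2 i hix
  exact Filter.mem_of_superset (hWopen.mem_nhds hpW) hWS

lemma slice_convex {I : Type*} (B : Set (ℝ × ℝ))
    (hslice : ∀ x₀ : ℝ, B ∩ {p : ℝ × ℝ | p.1 = x₀} = ∅ ∨
      IsConnected (B ∩ {p : ℝ × ℝ | p.1 = x₀}))
    (c : I → ℝ × ℝ) (ε : I → ℝ) (x : ℝ) :
    Convex ℝ {y : ℝ | (x, y) ∈ B \ ⋃ i, vcut B (c i) (ε i)} := by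
  have hset : {y : ℝ | (x, y) ∈ B \ ⋃ i, vcut B (c i) (ε i)} =
      {y : ℝ | (x, y) ∈ B} ∩ ⋂ i, {y : ℝ | x = (c i).1 → ε i * y < ε i * (c i).2} := by
    ext y
    simp only [Set.mem_setOf_eq, mem_S_iff, Set.mem_inter_iff, Set.mem_iInter,
      Set.mem_setOf_eq]
  rw [hset]
  refine Convex.inter (slice_ordConnected B hslice x).convex (convex_iInter fun i => ?_)
  by_cases h : x = (c i).1
  · have : {y : ℝ | x = (c i).1 → ε i * y < ε i * (c i).2} =
        {y : ℝ | ε i * y < ε i * (c i).2} := by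
      ext y; simp [h]
    rw [this]
    exact convex_halfSpace_lt (IsLinearMap.mk (mul_add _) (fun a y => by simp [smul_eq_mul]; ring)) _
  · have : {y : ℝ | x = (c i).1 → ε i * y < ε i * (c i).2} = Set.univ := by
      ext y; simp [h]
    rw [this]
    exact convex_univ

lemma slice_nonempty {I : Type*} (B : Set (ℝ × ℝ)) (hB : IsOpen B)
    (hslice : ∀ x₀ : ℝ, B ∩ {p : ℝ × ℝ | p.1 = x₀} = ∅ ∨
      IsConnected (B ∩ {p : ℝ × ℝ | p.1 = x₀}))
    (c : I → ℝ × ℝ) (hinj : Function.Injective c) (hc : ∀ i, c i ∈ B)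
    (hfin : ∀ x₀ : ℝ, {i : I | (c i).1 = x₀}.Finite)
    (ε : I → ℝ) (hε : ∀ i, ε i = 1 ∨ ε i = -1)
    (h3 : ∀ i j, (c i).1 = (c j).1 → (c j).2 < (c i).2 → ε j ≤ ε i)
    {x : ℝ} (hx : x ∈ Prod.fst '' B) :
    ∃ y : ℝ, (x, y) ∈ B \ ⋃ i, vcut B (c i) (ε i) := by
  set Y : Set ℝ := {y : ℝ | (x, y) ∈ B} with hY
  have hYopen : IsOpen Y := hB.preimage (by fun_prop : Continuous fun y : ℝ => (x, y))
  have hYord : Set.OrdConnected Y := slice_ordConnected B hslice x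
  have hYne : Y.Nonempty := by
    obtain ⟨p, hpB, hpx⟩ := hx
    exact ⟨p.2, by simpa [hY, ← hpx] using hpB⟩
  set F : Finset I := (hfin x).toFinset with hF
  set P : Finset I := F.filter (fun i => ε i = 1) with hP
  set N : Finset I := F.filter (fun i => ε i = -1) with hN
  have hcY : ∀ i ∈ F, (c i).2 ∈ Y := by
    intro i hi
    have hix : (c i).1 = x := by simpa [hF, Set.Finite.mem_toFinset] using hi
    simp only [hY, Set.mem_setOf_eq, ← hix]
    simpa using hc i
  -- key order claim
  have hNP : ∀ i ∈ N, ∀ j ∈ P, (c i).2 < (c j).2 := by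
    intro i hi j hj
    simp only [hN, hP, Finset.mem_filter, hF, Set.Finite.mem_toFinset, Set.mem_setOf_eq] at hi hj
    have hxx : (c i).1 = (c j).1 := hi.1.trans hj.1.symm
    rcases lt_trichotomy (c i).2 (c j).2 with h | h | h
    · exact h
    · exfalso
      have hij : i = j := hinj (Prod.ext hxx h)
      rw [hij, hj.2] at hi
      norm_num at hi
    · have := h3 i j hxx h
      rw [hi.2, hj.2] at this; linarith
  -- find y ∈ Y with ∀ j ∈ P, y < (c j).2 and ∀ i ∈ N, (c i).2 < y
  have main : ∃ y ∈ Y, (∀ j ∈ P, y < (c j).2) ∧ (∀ i ∈ N, (c i).2 < y) := by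
    rcases Finset.eq_empty_or_nonempty P with hPe | hPne
    · rcases Finset.eq_empty_or_nonempty N with hNe | hNne
      · obtain ⟨y, hy⟩ := hYne
        exact ⟨y, hy, by simp [hPe], by simp [hNe]⟩
      · obtain ⟨i₀, hi₀, hmax⟩ := N.exists_max_image (fun i => (c i).2) hNne
        have hM : (c i₀).2 ∈ Y := hcY i₀ (Finset.mem_of_mem_filter _ hi₀)
        obtain ⟨r, hr, hball⟩ := Metric.isOpen_iff.1 hYopen _ hM
        have hmem : (c i₀).2 + r / 2 ∈ Y := by
          apply hball
          rw [Metric.mem_ball, Real.dist_eq]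
          have he : (c i₀).2 + r / 2 - (c i₀).2 = r / 2 := by ring
          rw [he, abs_of_pos] <;> linarith
        refine ⟨(c i₀).2 + r / 2, hmem, by simp [hPe], ?_⟩
        intro i hi
        have := hmax i hi
        linarith
    · obtain ⟨j₀, hj₀, hmin⟩ := P.exists_min_image (fun i => (c i).2) hPne
      have hm : (c j₀).2 ∈ Y := hcY j₀ (Finset.mem_of_mem_filter _ hj₀)
      rcases Finset.eq_empty_or_nonempty N with hNe | hNne
      · obtain ⟨r, hr, hball⟩ := Metric.isOpen_iff.1 hYopen _ hm
        have hmem : (c j₀).2 - r / 2 ∈ Y := by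
          apply hball
          rw [Metric.mem_ball, Real.dist_eq]
          have he : (c j₀).2 - r / 2 - (c j₀).2 = -(r / 2) := by ring
          rw [he, abs_neg, abs_of_pos] <;> linarith
        refine ⟨(c j₀).2 - r / 2, hmem, ?_, by simp [hNe]⟩
        intro j hj
        have := hmin j hj
        linarith
      · obtain ⟨i₀, hi₀, hmax⟩ := N.exists_max_image (fun i => (c i).2) hNne
        have hM : (c i₀).2 ∈ Y := hcY i₀ (Finset.mem_of_mem_filter _ hi₀)
        have hlt : (c i₀).2 < (c j₀).2 := hNP i₀ hi₀ j₀ hj₀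
        set y := ((c i₀).2 + (c j₀).2) / 2 with hy
        refine ⟨y, hYord.out hM hm ⟨by simp [hy]; linarith, by simp [hy]; linarith⟩, ?_, ?_⟩
        · intro j hj
          have := hmin j hj
          simp only [hy]; linarith
        · intro i hi
          have := hmax i hi
          simp only [hy]; linarith
  obtain ⟨y, hyY, hyP, hyN⟩ := main
  refine ⟨y, (mem_S_iff B c ε (x, y)).2 ⟨hyY, fun i hi => ?_⟩⟩
  have hiF : i ∈ F := by simpa [hF, Set.Finite.mem_toFinset] using hi.symm
  rcases hε i with h1 | h1
  · have : i ∈ P := Finset.mem_filter.2 ⟨hiF, h1⟩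
    have := hyP i this
    rw [h1]; linarith
  · have : i ∈ N := Finset.mem_filter.2 ⟨hiF, h1⟩
    have := hyN i this
    rw [h1]; linarith

lemma one_to_three {I : Type*} (B : Set (ℝ × ℝ)) (hB : IsOpen B)
    (c : I → ℝ × ℝ) (hc : ∀ i, c i ∈ B)
    (hacc : ∀ x ∈ Prod.fst '' B, ¬ AccPt x (𝓟 (Set.range fun i => (c i).1)))
    (ε : I → ℝ) (hε : ∀ i, ε i = 1 ∨ ε i = -1)
    (h1 : IsPathConnected (B \ ⋃ i, vcut B (c i) (ε i))) :
    ∀ i j, (c i).1 = (c j).1 → (c j).2 < (c i).2 → ε j ≤ ε i := by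
  set S := B \ ⋃ i, vcut B (c i) (ε i) with hS
  by_contra hcon
  push_neg at hcon
  obtain ⟨i, j, hxx, hyy, hij⟩ := hcon
  have hi1 : ε i = -1 := by
    rcases hε i with h | h
    · exfalso
      rcases hε j with h' | h' <;> rw [h, h'] at hij <;> linarith
    · exact h
  have hj1 : ε j = 1 := by
    rcases hε j with h' | h'
    · exact h'
    · exfalso
      rw [hi1, h'] at hij
      linarith
  set x₀ := (c i).1 with hx₀
  -- every point of S avoids the vertical line x = x₀
  have hempty : ∀ p ∈ S, p.1 ≠ x₀ := by
    intro p hp hpx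
    rw [hS, mem_S_iff] at hp
    have h₁ := hp.2 i hpx
    have h₂ := hp.2 j (by rw [hpx]; exact hxx)
    rw [hi1] at h₁
    rw [hj1] at h₂
    simp only [neg_mul, one_mul, neg_lt_neg_iff] at h₁ h₂
    linarith
  -- points of S on both sides
  have hx₀U : x₀ ∈ Prod.fst '' B := ⟨c i, hc i, rfl⟩
  obtain ⟨δ, hδ, hδc⟩ := acc_nbhd c (hacc x₀ hx₀U)
  have hUopen : IsOpen (Prod.fst '' B) := isOpenMap_fst B hB
  obtain ⟨r, hr, hball⟩ := Metric.isOpen_iff.1 hUopen x₀ hx₀U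
  set δ' := min δ r with hδ'
  have hδ'0 : 0 < δ' := lt_min hδ hr
  have hside : ∀ x : ℝ, x ∈ Prod.fst '' B → |x - x₀| < δ → x ≠ x₀ → ∃ p ∈ S, p.1 = x := by
    intro x hxU hxδ hxne
    obtain ⟨p, hpB, hpx⟩ := hxU
    refine ⟨p, ?_, hpx⟩
    rw [hS, mem_S_iff]
    refine ⟨hpB, fun k hk => ?_⟩
    exfalso
    have : (c k).1 = x₀ := hδc k (by rw [← hk, hpx]; exact hxδ)
    exact hxne (by rw [← hpx, hk, this])
  have hmem₁ : x₀ - δ' / 2 ∈ Prod.fst '' B := hball (by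
    rw [Metric.mem_ball, Real.dist_eq]
    have he : x₀ - δ' / 2 - x₀ = -(δ' / 2) := by ring
    rw [he, abs_neg, abs_of_pos] <;> [skip; linarith]
    calc δ' / 2 < δ' := by linarith
    _ ≤ r := min_le_right _ _)
  have hmem₂ : x₀ + δ' / 2 ∈ Prod.fst '' B := hball (by
    rw [Metric.mem_ball, Real.dist_eq]
    have he : x₀ + δ' / 2 - x₀ = δ' / 2 := by ring
    rw [he, abs_of_pos] <;> [skip; linarith]
    calc δ' / 2 < δ' := by linarith
    _ ≤ r := min_le_right _ _)
  have habs₁ : |x₀ - δ' / 2 - x₀| < δ := by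
    have he : x₀ - δ' / 2 - x₀ = -(δ' / 2) := by ring
    rw [he, abs_neg, abs_of_pos] <;> [skip; linarith]
    calc δ' / 2 < δ' := by linarith
    _ ≤ δ := min_le_left _ _
  have habs₂ : |x₀ + δ' / 2 - x₀| < δ := by
    have he : x₀ + δ' / 2 - x₀ = δ' / 2 := by ring
    rw [he, abs_of_pos] <;> [skip; linarith]
    calc δ' / 2 < δ' := by linarith
    _ ≤ δ := min_le_left _ _
  obtain ⟨p, hpS, hpx⟩ := hside _ hmem₁ habs₁ (by intro h; nlinarith [h])
  obtain ⟨q, hqS, hqx⟩ := hside _ hmem₂ habs₂ (by intro h; nlinarith [h])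
  -- path from p to q and IVT
  obtain ⟨γ, hγ⟩ := (h1.joinedIn p hpS q hqS)
  have hcont : Continuous fun t : ℝ => (γ.extend t).1 :=
    continuous_fst.comp γ.continuous_extend
  have hx₀mem : x₀ ∈ Set.Icc ((fun t : ℝ => (γ.extend t).1) 0) ((fun t : ℝ => (γ.extend t).1) 1) := by
    simp only [Path.extend_zero, Path.extend_one, hpx, hqx]
    constructor <;> linarith
  obtain ⟨t, ht, hteq⟩ := intermediate_value_Icc (by norm_num : (0:ℝ) ≤ 1)
    hcont.continuousOn hx₀mem
  have : γ.extend t ∈ S := by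
    rw [γ.extend_apply ht]
    exact hγ _
  exact hempty _ this hteq

lemma three_to_two {I : Type*} (B : Set (ℝ × ℝ)) (hB : IsOpen B)
    (hBconn : IsConnected B)
    (hslice : ∀ x₀ : ℝ, B ∩ {p : ℝ × ℝ | p.1 = x₀} = ∅ ∨
      IsConnected (B ∩ {p : ℝ × ℝ | p.1 = x₀}))
    (c : I → ℝ × ℝ) (hinj : Function.Injective c) (hc : ∀ i, c i ∈ B)
    (hfin : ∀ x₀ : ℝ, {i : I | (c i).1 = x₀}.Finite)
    (hacc : ∀ x ∈ Prod.fst '' B, ¬ AccPt x (𝓟 (Set.range fun i => (c i).1)))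
    (ε : I → ℝ) (hε : ∀ i, ε i = 1 ∨ ε i = -1)
    (h3 : ∀ i j, (c i).1 = (c j).1 → (c j).2 < (c i).2 → ε j ≤ ε i) :
    ContractibleSpace ↥(B \ ⋃ i, vcut B (c i) (ε i)) := by
  set S := B \ ⋃ i, vcut B (c i) (ε i) with hSdef
  have hSopen : IsOpen S := S_open B hB c hfin hacc ε
  set U : Set ℝ := Prod.fst '' B with hUdef
  have hUconv : Convex ℝ U :=
    ((hBconn.isPreconnected.image _ continuous_fst.continuousOn).ordConnected).convex
  set t : ↥U → Set ℝ := fun x => {y : ℝ | ((x : ℝ), y) ∈ S} with htdef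
  have ht : ∀ x : ↥U, Convex ℝ (t x) := fun x => slice_convex B hslice c ε x
  have hH : ∀ x : ↥U, ∃ v : ℝ, ∀ᶠ z in 𝓝 x, v ∈ t z := by
    intro x
    obtain ⟨y, hy⟩ := slice_nonempty B hB hslice c hinj hc hfin ε hε h3 x.2
    obtain ⟨r, hr, hball⟩ := Metric.isOpen_iff.1 hSopen ((x : ℝ), y) hy
    refine ⟨y, ?_⟩
    filter_upwards [Metric.ball_mem_nhds x hr] with z hz
    apply hball
    rw [Metric.mem_ball] at hz ⊢
    rw [Prod.dist_eq]
    simp only [dist_self]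
    rw [Subtype.dist_eq] at hz
    exact lt_of_le_of_lt (max_le le_rfl dist_nonneg) hz
  obtain ⟨s, hs⟩ := exists_continuous_forall_mem_convex_of_local_const ht hH
  -- base point
  obtain ⟨b, hb⟩ := hBconn.nonempty
  have hbU : b.1 ∈ U := ⟨b, hb, rfl⟩
  set x₀ : ↥U := ⟨b.1, hbU⟩ with hx₀def
  set p₀ : ↥S := ⟨((x₀ : ℝ), s x₀), hs x₀⟩ with hp₀def
  -- projection to the base
  have hSU : ∀ p : ↥S, (p : ℝ × ℝ).1 ∈ U := fun p => ⟨(p : ℝ × ℝ), p.2.1, rfl⟩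
  set π : ↥S → ↥U := fun p => ⟨(p : ℝ × ℝ).1, hSU p⟩ with hπdef
  have hπcont : Continuous π :=
    (continuous_fst.comp continuous_subtype_val).subtype_mk _
  -- the retraction onto the graph of s
  set r : C(↥S, ↥S) :=
    ⟨fun p => ⟨((p : ℝ × ℝ).1, s (π p)), hs (π p)⟩,
      ((continuous_fst.comp continuous_subtype_val).prodMk
        (s.continuous.comp hπcont)).subtype_mk _⟩ with hrdef
  -- slice membership of points of S
  have hmem_slice : ∀ p : ↥S, (p : ℝ × ℝ).2 ∈ t (π p) := by
    intro p
    show ((p : ℝ × ℝ).1, (p : ℝ × ℝ).2) ∈ S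
    simpa using p.2
  -- homotopy from id to r (vertical straightening)
  have hcont1 : Continuous fun q : unitInterval × ↥S =>
      ((((q.2 : ℝ × ℝ)).1, (1 - (q.1 : ℝ)) * ((q.2 : ℝ × ℝ)).2 + (q.1 : ℝ) * s (π q.2)) : ℝ × ℝ) := by
    fun_prop
  have hmem1 : ∀ q : unitInterval × ↥S,
      (((q.2 : ℝ × ℝ)).1, (1 - (q.1 : ℝ)) * ((q.2 : ℝ × ℝ)).2 + (q.1 : ℝ) * s (π q.2)) ∈ S := by
    rintro ⟨τ, p⟩
    have h1 : (p : ℝ × ℝ).2 ∈ t (π p) := hmem_slice p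
    have h2 : s (π p) ∈ t (π p) := hs (π p)
    have := (ht (π p)) h1 h2 (sub_nonneg.2 τ.2.2)
      (τ.2.1) (by ring)
    exact this
  set H1 : ContinuousMap.Homotopy (ContinuousMap.id ↥S) r :=
    { toFun := fun q => ⟨(((q.2 : ℝ × ℝ)).1,
        (1 - (q.1 : ℝ)) * ((q.2 : ℝ × ℝ)).2 + (q.1 : ℝ) * s (π q.2)), hmem1 q⟩
      continuous_toFun := hcont1.subtype_mk _
      map_zero_left := by
        intro p
        apply Subtype.ext
        simp
      map_one_left := by
        intro p
        apply Subtype.ext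
        simp [hrdef] } with hH1def
  -- homotopy from r to the constant map (sliding along the graph)
  have hlmem : ∀ q : unitInterval × ↥S,
      (1 - (q.1 : ℝ)) * ((q.2 : ℝ × ℝ)).1 + (q.1 : ℝ) * (x₀ : ℝ) ∈ U := by
    rintro ⟨τ, p⟩
    have := hUconv (hSU p) hbU (sub_nonneg.2 τ.2.2) τ.2.1 (by ring)
    simpa [smul_eq_mul] using this
  set lam : unitInterval × ↥S → ↥U := fun q =>
    ⟨(1 - (q.1 : ℝ)) * ((q.2 : ℝ × ℝ)).1 + (q.1 : ℝ) * (x₀ : ℝ), hlmem q⟩ with hlamdef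
  have hlamcont : Continuous lam := by
    apply Continuous.subtype_mk
    fun_prop
  set H2 : ContinuousMap.Homotopy r (ContinuousMap.const ↥S p₀) :=
    { toFun := fun q => ⟨(((lam q) : ℝ), s (lam q)), hs (lam q)⟩
      continuous_toFun := ((continuous_subtype_val.comp hlamcont).prodMk
        (s.continuous.comp hlamcont)).subtype_mk _
      map_zero_left := by
        intro p
        have hl : lam (0, p) = π p := by
          apply Subtype.ext
          simp [hlamdef, hπdef]
        apply Subtype.ext
        dsimp only
        rw [hl]
        simp [hrdef, hπdef]
      map_one_left := by
        intro p
        have hl : lam (1, p) = x₀ := by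
          apply Subtype.ext
          simp [hlamdef]
        apply Subtype.ext
        dsimp only
        rw [hl]
        simp [hp₀def] } with hH2def
  rw [contractible_iff_id_nullhomotopic]
  exact ⟨p₀, ⟨H1.trans H2⟩⟩


/-- For `B ⊆ ℝ²` open and connected with every vertical slice empty or connected, and
countably many pairwise distinct points `c i` of `B` with finitely many on each
vertical line and whose first coordinates have no accumulation point in `pr₁(B)`,
the following are equivalent for a choice of signs `ε`: the cut complement `S_ε` is
path-connected; `S_ε` is contractible; the signs are nondecreasing along each vertical
line. -/
theorem stmt8 {I : Type*} [Countable I] (B : Set (ℝ × ℝ)) (hB : IsOpen B)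
    (hBconn : IsConnected B)
    (hslice : ∀ x₀ : ℝ, B ∩ {p : ℝ × ℝ | p.1 = x₀} = ∅ ∨
      IsConnected (B ∩ {p : ℝ × ℝ | p.1 = x₀}))
    (c : I → ℝ × ℝ) (hinj : Function.Injective c) (hc : ∀ i, c i ∈ B)
    (hfin : ∀ x₀ : ℝ, {i : I | (c i).1 = x₀}.Finite)
    (hacc : ∀ x ∈ Prod.fst '' B, ¬ AccPt x (𝓟 (Set.range fun i => (c i).1)))
    (ε : I → ℝ) (hε : ∀ i, ε i = 1 ∨ ε i = -1) :
    List.TFAE [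
      IsPathConnected (B \ ⋃ i, vcut B (c i) (ε i)),
      ContractibleSpace ↥(B \ ⋃ i, vcut B (c i) (ε i)),
      ∀ i j, (c i).1 = (c j).1 → (c j).2 < (c i).2 → ε j ≤ ε i] := by
  tfae_have 1 → 3 := fun h1 => one_to_three B hB c hc hacc ε hε h1
  tfae_have 3 → 2 := fun h3 => three_to_two B hB hBconn hslice c hinj hc hfin hacc ε hε h3
  tfae_have 2 → 1 := by
    intro h2
    rw [isPathConnected_iff_pathConnectedSpace]
    haveI := h2
    infer_instance
  tfae_finish
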